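/- The function s ↦ √(sinh s) - e^{s/2}/√2 is square-integrable on (0, ∞), and hence the Wiener integral ∫₀^∞ (√(sinh s) - e^{s/2}/√2) dδ_s against a standard Brownian motion δ is a well-defined centered Gaussian random variable with variance (π-3)/2. -/

import Mathlib

open MeasureTheory ProbabilityTheory Real Set Filter Topology



noncomputable def Fa (s : ℝ) : ℝ :=
  Real.exp s + Real.exp (-s) / 2 - Real.sqrt (Real.exp (2 * s) - 1) + Real.arccos (Real.exp (-s))

lemma sqrt_exp' (x : ℝ) : Real.sqrt (Real.exp x) = Real.exp (x / 2) := by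
  rw [show Real.exp x = Real.exp (x / 2) * Real.exp (x / 2) by rw [← Real.exp_add]; ring_nf, Real.sqrt_mul_self (Real.exp_nonneg _)]

lemma sq_eq (x : ℝ) (hx : 0 < x) :
    (Real.sqrt (Real.sinh x) - Real.exp (x / 2) / Real.sqrt 2) ^ 2
      = Real.exp x - Real.exp (-x) / 2 - Real.sqrt (Real.exp (2 * x) - 1) := by
  have hsinh : 0 ≤ Real.sinh x := (Real.sinh_pos_iff.2 hx).le
  have cross : Real.sqrt (Real.sinh x) * (Real.exp (x / 2) / Real.sqrt 2)
      = Real.sqrt (Real.exp (2 * x) - 1) / 2 := by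
    rw [← sqrt_exp', div_eq_mul_inv, ← Real.sqrt_inv, ← mul_assoc,
      ← Real.sqrt_mul hsinh, ← Real.sqrt_mul (by positivity)]
    rw [show Real.sinh x * Real.exp x * 2⁻¹ = (Real.exp (2 * x) - 1) / 4 by
      rw [Real.sinh_eq, Real.exp_neg, show (2:ℝ) * x = x + x by ring, Real.exp_add]
      have := (Real.exp_pos x).ne'
      field_simp
      ring]
    rw [Real.sqrt_div (by nlinarith [Real.one_le_exp (by positivity : (0:ℝ) ≤ 2 * x)]) 4,
      show Real.sqrt 4 = 2 by rw [show (4:ℝ) = 2 ^ 2 by norm_num, Real.sqrt_sq (by norm_num)]]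
  have e1 : Real.sqrt (Real.sinh x) ^ 2 = Real.sinh x := Real.sq_sqrt hsinh
  have e2 : (Real.exp (x / 2) / Real.sqrt 2) ^ 2 = Real.exp x / 2 := by
    rw [div_pow, Real.sq_sqrt (by norm_num : (0:ℝ) ≤ 2), sq, ← Real.exp_add]
    ring_nf
  have e3 : Real.sinh x + Real.exp x / 2 = Real.exp x - Real.exp (-x) / 2 := by
    rw [Real.sinh_eq]; ring
  nlinarith [cross, e1, e2, e3]

lemma exp_neg_sq (x : ℝ) : Real.exp (2*x) * (Real.exp (-x) * Real.exp (-x)) = 1 := by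
  rw [← Real.exp_add, ← Real.exp_add, show 2*x + (-x + -x) = 0 by ring, Real.exp_zero]

lemma hu_pos (x : ℝ) (hx : 0 < x) : 0 < Real.exp (2 * x) - 1 := by
  have := Real.exp_lt_exp.2 (show (0:ℝ) < 2*x by linarith)
  rw [Real.exp_zero] at this; linarith

lemma hasDerivAt_Fa (x : ℝ) (hx : 0 < x) :
    HasDerivAt Fa (Real.exp x - Real.exp (-x) / 2 - Real.sqrt (Real.exp (2 * x) - 1)) x := by
  have hu : 0 < Real.exp (2 * x) - 1 := hu_pos x hx
  have ht : 0 < Real.sqrt (Real.exp (2 * x) - 1) := Real.sqrt_pos.2 hu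
  have hexp : HasDerivAt Real.exp (Real.exp x) x := Real.hasDerivAt_exp x
  have hneg : HasDerivAt (fun s : ℝ => Real.exp (-s)) (-Real.exp (-x)) x := by
    simpa [Function.comp_def] using (Real.hasDerivAt_exp (-x)).comp x (hasDerivAt_neg x)
  have hdiv2 := hneg.div_const 2
  have hinner : HasDerivAt (fun s : ℝ => Real.exp (2*s) - 1) (Real.exp (2*x) * 2) x := by
    simpa using ((Real.hasDerivAt_exp (2*x)).comp x ((hasDerivAt_id x).const_mul 2)).sub_const 1
  have hsqrt := hinner.sqrt hu.ne'
  have he1 : Real.exp (-x) ≠ -1 := by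
    intro h; have := Real.exp_pos (-x); rw [h] at this; linarith
  have he2 : Real.exp (-x) ≠ 1 := by
    have := Real.exp_lt_exp.2 (show -x < 0 by linarith)
    rw [Real.exp_zero] at this; linarith
  have harccos := (Real.hasDerivAt_arccos he1 he2).comp x hneg
  have key : Real.sqrt (1 - Real.exp (-x) ^ 2)
      = Real.sqrt (Real.exp (2*x) - 1) * Real.exp (-x) := by
    rw [show 1 - Real.exp (-x)^2
        = (Real.exp (2*x) - 1) * (Real.exp (-x) * Real.exp (-x)) by
      have := exp_neg_sq x; nlinarith [this]]
    rw [Real.sqrt_mul hu.le, Real.sqrt_mul_self (Real.exp_nonneg _)]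
  have total := ((hexp.add hdiv2).sub hsqrt).add harccos
  refine (show HasDerivAt Fa _ x from total).congr_deriv ?_
  rw [key]
  have hex : Real.exp (-x) ≠ 0 := (Real.exp_pos _).ne'
  have ht2 : Real.sqrt (Real.exp (2*x) - 1) ^ 2 = Real.exp (2*x) - 1 :=
    Real.sq_sqrt hu.le
  rw [mul_comm 2 x] at ht ht2
  field_simp
  linear_combination 2 * ht2

lemma tendsto_Fa : Tendsto Fa atTop (𝓝 (π / 2)) := by
  have t1 : Tendsto (fun s : ℝ => Real.exp s - Real.sqrt (Real.exp (2*s) - 1)) atTop (𝓝 0) := by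
    apply tendsto_of_tendsto_of_tendsto_of_le_of_le' tendsto_const_nhds
      Real.tendsto_exp_neg_atTop_nhds_zero
    · filter_upwards [eventually_ge_atTop (0:ℝ)] with s hs
      have h2 : Real.sqrt (Real.exp (2*s) - 1) ≤ Real.exp s := by
        have : Real.exp s = Real.sqrt (Real.exp (2*s)) := by
          rw [sqrt_exp']; ring_nf
        rw [this]
        exact Real.sqrt_le_sqrt (by linarith [Real.exp_pos (2*s)])
      linarith
    · filter_upwards [eventually_ge_atTop (0:ℝ)] with s hs
      have h1 : Real.exp s - Real.exp (-s) ≤ Real.sqrt (Real.exp (2*s) - 1) := by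
        apply Real.le_sqrt_of_sq_le
        have e1 := exp_neg_sq s
        have e2 : Real.exp s * Real.exp s = Real.exp (2*s) := by
          rw [← Real.exp_add]; ring_nf
        have e3 : Real.exp s * Real.exp (-s) = 1 := by
          rw [← Real.exp_add]; simp
        have e4 : Real.exp (-s) * Real.exp (-s) ≤ 1 := by
          rw [← Real.exp_add]
          exact Real.exp_le_one_iff.2 (by linarith)
        nlinarith
      linarith
  have t2 := Real.tendsto_exp_neg_atTop_nhds_zero.div_const 2
  have t3 : Tendsto (fun s : ℝ => Real.arccos (Real.exp (-s))) atTop (𝓝 (π/2)) := by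
    have := (Real.continuous_arccos.tendsto 0).comp Real.tendsto_exp_neg_atTop_nhds_zero
    rw [Real.arccos_zero] at this
    exact this
  have := (t1.add t2).add t3
  rw [show (0:ℝ) + 0/2 + π/2 = π/2 by ring] at this
  · exact this.congr (fun s => by simp only [Fa]; ring)

lemma continuous_Fa : Continuous Fa := by
  unfold Fa
  continuity

lemma Fa_zero : Fa 0 = 3/2 := by
  simp [Fa, Real.arccos_one]
  norm_num

lemma integral_key :
    IntegrableOn (fun s : ℝ => (Real.sqrt (Real.sinh s) - Real.exp (s / 2) / Real.sqrt 2) ^ 2)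
      (Ioi 0) volume ∧
    ∫ s in Ioi (0:ℝ), (Real.sqrt (Real.sinh s) - Real.exp (s / 2) / Real.sqrt 2) ^ 2
      = (π - 3) / 2 := by
  have hcont : ContinuousWithinAt Fa (Ici 0) 0 := continuous_Fa.continuousWithinAt
  have hderiv : ∀ x ∈ Ioi (0:ℝ), HasDerivAt Fa
      ((Real.sqrt (Real.sinh x) - Real.exp (x / 2) / Real.sqrt 2) ^ 2) x := by
    intro x hx
    rw [sq_eq x hx]
    exact hasDerivAt_Fa x hx
  have hpos : ∀ x ∈ Ioi (0:ℝ),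
      0 ≤ (Real.sqrt (Real.sinh x) - Real.exp (x / 2) / Real.sqrt 2) ^ 2 :=
    fun x _ => sq_nonneg _
  refine ⟨integrableOn_Ioi_deriv_of_nonneg hcont hderiv hpos tendsto_Fa, ?_⟩
  rw [integral_Ioi_of_hasDerivAt_of_nonneg hcont hderiv hpos tendsto_Fa, Fa_zero]
  ring

/-- The function `s ↦ √(sinh s) - e^{s/2}/√2` is square-integrable on `(0,∞)`, and hence,
for any Wiener-integral map `W` (sending each `f ∈ L²(0,∞)` to a random variable whose law
is centered Gaussian with variance `∫₀^∞ f²`), the Wiener integral of this function is a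
centered Gaussian random variable with variance `(π - 3)/2`. -/
theorem wiener_integral_sqrt_sinh
    {Ω : Type*} [MeasurableSpace Ω] (μ : Measure Ω) [IsProbabilityMeasure μ]
    (W : (ℝ → ℝ) → Ω → ℝ)
    (hW : ∀ f : ℝ → ℝ, MemLp f 2 (volume.restrict (Ioi 0)) →
      Measure.map (W f) μ
        = gaussianReal 0 (ENNReal.ofReal (∫ s in Ioi (0 : ℝ), (f s) ^ 2)).toNNReal) :
    MemLp (fun s : ℝ => Real.sqrt (Real.sinh s) - Real.exp (s / 2) / Real.sqrt 2) 2
      (volume.restrict (Ioi 0)) ∧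
    Measure.map (W (fun s : ℝ => Real.sqrt (Real.sinh s) - Real.exp (s / 2) / Real.sqrt 2)) μ
      = gaussianReal 0 (ENNReal.ofReal ((π - 3) / 2)).toNNReal := by
  have hmeas : AEStronglyMeasurable
      (fun s : ℝ => Real.sqrt (Real.sinh s) - Real.exp (s / 2) / Real.sqrt 2)
      (volume.restrict (Ioi 0)) := by
    apply Continuous.aestronglyMeasurable
    continuity
  have hmem : MemLp (fun s : ℝ => Real.sqrt (Real.sinh s) - Real.exp (s / 2) / Real.sqrt 2) 2
      (volume.restrict (Ioi 0)) :=
    (memLp_two_iff_integrable_sq hmeas).2 integral_key.1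
  refine ⟨hmem, ?_⟩
  rw [hW _ hmem, integral_key.2]
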